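/- Let g and m be positive integers, let r > 0 and δ ∈ (0,1), let p be a real number with p ≥ 1, and let w be a weight vector on Fin g. For each i ∈ Fin g let (Ω_i, μ_i) be a probability space and let f_i : Ω_i → ℝ be measurable with 0 ≤ f_i(ω) ≤ r for all ω. Let S i := ∫ f_i dμ_i, and for a sample x drawn from the product measure ⊗_{i ∈ Fin g} μ_i^{⊗ m} (i.e., m independent draws from each of the g distributions, all mutually independent), let Ŝ(x) i := (1/m) ∑_{j ∈ Fin m} f_i (x i j). Then with probability at least 1 − δ over the sample x, |M_p(S; w) − M_p(Ŝ(x); w)| ≤ r * sqrt(log(2*g/δ) / (2*m)). -/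

import Mathlib

open scoped BigOperators
open MeasureTheory
open Real

/-- The weighted power mean `M_p(S; w)`. For `p ≠ 0` it is
`(∑ i, w i * (S i)^p)^(1/p)`; for `p = 0` it is `exp (∑ i, w i * log (S i))`. -/
noncomputable def pmean (g : ℕ) (p : ℝ) (w S : Fin g → ℝ) : ℝ :=
  if p = 0 then Real.exp (∑ i, w i * Real.log (S i))
  else (∑ i, w i * S i ^ p) ^ (1 / p)

lemma hoeff_scalar {q : ℝ} (hq0 : 0 ≤ q) (hq1 : q ≤ 1) (h : ℝ) :
    (1 - q) * Real.exp (-q * h) + q * Real.exp ((1 - q) * h) ≤ Real.exp (h ^ 2 / 8) := by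
  set u : ℝ → ℝ := fun x => 1 - q + q * Real.exp x with hu_def
  have hu : ∀ x, 0 < u x := by
    intro x
    have h1 := exp_pos x
    have h2 : 0 ≤ q * Real.exp x := mul_nonneg hq0 h1.le
    have h3 : 0 ≤ (1 - q) * Real.exp x := mul_nonneg (by linarith) h1.le
    simp only [hu_def]
    nlinarith
  set G : ℝ → ℝ := fun x => q * x + x ^ 2 / 8 - Real.log (u x) with hG_def
  set G' : ℝ → ℝ := fun x => q + x / 4 - q * Real.exp x / u x with hG'_def
  set G'' : ℝ → ℝ := fun x =>
    1 / 4 - (q * Real.exp x * u x - q * Real.exp x * (q * Real.exp x)) / (u x) ^ 2 with hG''_def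
  have hderivu : ∀ x, HasDerivAt u (q * Real.exp x) x := by
    intro x
    exact ((Real.hasDerivAt_exp x).const_mul q).const_add (1 - q)
  have hderivG : ∀ x, HasDerivAt G (G' x) x := by
    intro x
    have h1 : HasDerivAt (fun x : ℝ => q * x) q x := by
      simpa using (hasDerivAt_id x).const_mul q
    have h2 : HasDerivAt (fun x : ℝ => x ^ 2 / 8) (x / 4) x := by
      have := (hasDerivAt_pow 2 x).div_const 8
      simpa using this.congr_deriv (by ring)
    have h3 : HasDerivAt (fun x => Real.log (u x)) (q * Real.exp x / u x) x :=
      (hderivu x).log (hu x).ne'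
    exact (h1.add h2).sub h3
  have hderivG' : ∀ x, HasDerivAt G' (G'' x) x := by
    intro x
    have h1 : HasDerivAt (fun x : ℝ => q + x / 4) (1 / 4) x := by
      simpa using ((hasDerivAt_id x).div_const 4).const_add q
    have h2 : HasDerivAt (fun x => q * Real.exp x / u x)
        ((q * Real.exp x * u x - q * Real.exp x * (q * Real.exp x)) / (u x) ^ 2) x :=
      ((Real.hasDerivAt_exp x).const_mul q).div (hderivu x) (hu x).ne'
    exact h1.sub h2
  have hG''nonneg : ∀ x, 0 ≤ G'' x := by
    intro x
    have hux := hu x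
    have hE := exp_pos x
    have key : q * Real.exp x * u x - q * Real.exp x * (q * Real.exp x) ≤ (u x) ^ 2 / 4 := by
      simp only [hu_def]
      nlinarith [sq_nonneg ((1 - q) - q * Real.exp x)]
    have : (q * Real.exp x * u x - q * Real.exp x * (q * Real.exp x)) / (u x) ^ 2 ≤ 1 / 4 := by
      rw [div_le_iff₀ (by positivity)]
      nlinarith
    simp only [hG''_def]
    linarith
  have hG'mono : Monotone G' := by
    have hdiff : Differentiable ℝ G' := fun x => (hderivG' x).differentiableAt
    apply monotone_of_deriv_nonneg hdiff
    intro x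
    rw [(hderivG' x).deriv]
    exact hG''nonneg x
  have hG'0 : G' 0 = 0 := by
    simp [hG'_def, hu_def]
  have hGdiff : Differentiable ℝ G := fun x => (hderivG x).differentiableAt
  have hGderiv : deriv G = G' := funext fun x => (hderivG x).deriv
  have hGmin : ∀ x, 0 ≤ G x := by
    have hG0 : G 0 = 0 := by simp [hG_def, hu_def]
    intro x
    rcases le_or_gt 0 x with hx | hx
    · have hmono : MonotoneOn G (Set.Ici 0) := by
        apply monotoneOn_of_deriv_nonneg (convex_Ici 0) hGdiff.continuous.continuousOn
          (hGdiff.differentiableOn)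
        intro y hy
        rw [hGderiv]
        rw [interior_Ici] at hy
        calc (0:ℝ) = G' 0 := hG'0.symm
          _ ≤ G' y := hG'mono (le_of_lt hy)
      calc (0:ℝ) = G 0 := hG0.symm
        _ ≤ G x := hmono (Set.self_mem_Ici) hx hx
    · have hanti : AntitoneOn G (Set.Iic 0) := by
        apply antitoneOn_of_deriv_nonpos (convex_Iic 0) hGdiff.continuous.continuousOn
          (hGdiff.differentiableOn)
        intro y hy
        rw [hGderiv]
        rw [interior_Iic] at hy
        calc G' y ≤ G' 0 := hG'mono (le_of_lt hy)
          _ = 0 := hG'0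
      calc (0:ℝ) = G 0 := hG0.symm
        _ ≤ G x := hanti hx.le (Set.self_mem_Iic) hx.le
  -- conclude
  have hlog : Real.log (u h) ≤ q * h + h ^ 2 / 8 := by
    have := hGmin h
    simp only [hG_def] at this
    linarith
  have hLHS : (1 - q) * Real.exp (-q * h) + q * Real.exp ((1 - q) * h)
      = Real.exp (-q * h) * u h := by
    simp only [hu_def]
    rw [show (1 - q) * h = -q * h + h by ring, Real.exp_add]
    ring
  rw [hLHS]
  calc Real.exp (-q * h) * u h = Real.exp (-q * h + Real.log (u h)) := by
        rw [Real.exp_add, Real.exp_log (hu h)]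
    _ ≤ Real.exp (-q * h + (q * h + h ^ 2 / 8)) := by
        apply Real.exp_le_exp.2; linarith
    _ = Real.exp (h ^ 2 / 8) := by ring_nf

open MeasureTheory in
/-- Hoeffding's lemma: mgf bound for a centered bounded random variable. -/
lemma hoeffding_mgf {α : Type*} [MeasurableSpace α] (ν : Measure α) [IsProbabilityMeasure ν]
    (X : α → ℝ) (hX : Measurable X) (a b : ℝ) (hab : a ≤ b) (hXb : ∀ ω, X ω ∈ Set.Icc a b)
    (hmean : ∫ ω, X ω ∂ν = 0) (l : ℝ) :
    ∫ ω, Real.exp (l * X ω) ∂ν ≤ Real.exp (l ^ 2 * (b - a) ^ 2 / 8) := by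
  have hXint : Integrable X ν := by
    apply Integrable.mono' (integrable_const (max |a| |b|)) hX.aestronglyMeasurable
    filter_upwards with ω
    have h1 := (hXb ω).1; have h2 := (hXb ω).2
    rw [Real.norm_eq_abs, abs_le]; constructor
    · calc -(max |a| |b|) ≤ -|a| := by simp [neg_le_neg_iff]
        _ ≤ a := neg_abs_le a
        _ ≤ X ω := h1
    · calc X ω ≤ b := h2
        _ ≤ |b| := le_abs_self b
        _ ≤ max |a| |b| := le_max_right _ _
  have ha0 : a ≤ 0 := by
    have : ∫ _ω, a ∂ν ≤ ∫ ω, X ω ∂ν :=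
      integral_mono (integrable_const a) hXint fun ω => (hXb ω).1
    simpa [hmean] using this
  have hb0 : 0 ≤ b := by
    have : ∫ ω, X ω ∂ν ≤ ∫ _ω, b ∂ν :=
      integral_mono hXint (integrable_const b) fun ω => (hXb ω).2
    simpa [hmean] using this
  rcases eq_or_lt_of_le hab with heq | hlt
  · -- a = b forces a = b = 0 and X = 0
    have ha : a = 0 := le_antisymm ha0 (heq ▸ hb0)
    have hbz : b = 0 := by rw [← heq, ha]
    have hX0 : ∀ ω, X ω = 0 := fun ω =>
      le_antisymm (hbz ▸ (hXb ω).2) (ha ▸ (hXb ω).1)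
    simp only [hX0, mul_zero, Real.exp_zero]
    rw [integral_const]
    simp only [measure_univ, probReal_univ, ENNReal.toReal_one, smul_eq_mul, one_mul]
    rw [Real.one_le_exp_iff]
    positivity
  · have hba : 0 < b - a := sub_pos.2 hlt
    -- pointwise convexity bound
    have hpt : ∀ ω, Real.exp (l * X ω) ≤
        (b * Real.exp (l * a) - a * Real.exp (l * b)) / (b - a)
          + X ω * ((Real.exp (l * b) - Real.exp (l * a)) / (b - a)) := by
      intro ω
      have h1 := (hXb ω).1; have h2 := (hXb ω).2
      have hs : 0 ≤ (b - X ω) / (b - a) := div_nonneg (by linarith) hba.le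
      have ht : 0 ≤ (X ω - a) / (b - a) := div_nonneg (by linarith) hba.le
      have hst : (b - X ω) / (b - a) + (X ω - a) / (b - a) = 1 := by
        field_simp
        ring
      have hcvx := convexOn_exp.2 (Set.mem_univ (l * a)) (Set.mem_univ (l * b)) hs ht hst
      have harg : ((b - X ω) / (b - a)) • (l * a) + ((X ω - a) / (b - a)) • (l * b)
          = l * X ω := by
        simp only [smul_eq_mul]
        field_simp
        ring
      rw [harg] at hcvx
      calc Real.exp (l * X ω) ≤ (b - X ω) / (b - a) * Real.exp (l * a)
            + (X ω - a) / (b - a) * Real.exp (l * b) := by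
            simpa [smul_eq_mul] using hcvx
        _ = (b * Real.exp (l * a) - a * Real.exp (l * b)) / (b - a)
            + X ω * ((Real.exp (l * b) - Real.exp (l * a)) / (b - a)) := by
            field_simp
            ring
    -- integrate
    have hexpint : Integrable (fun ω => Real.exp (l * X ω)) ν := by
      apply Integrable.mono' (integrable_const (Real.exp (|l| * max |a| |b|)))
        (hX.const_mul l).exp.aestronglyMeasurable
      filter_upwards with ω
      rw [Real.norm_eq_abs, Real.abs_exp, Real.exp_le_exp]
      have h1 := (hXb ω).1; have h2 := (hXb ω).2
      calc l * X ω ≤ |l * X ω| := le_abs_self _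
        _ = |l| * |X ω| := abs_mul _ _
        _ ≤ |l| * max |a| |b| := by
            apply mul_le_mul_of_nonneg_left _ (abs_nonneg l)
            rw [abs_le]
            constructor
            · calc -(max |a| |b|) ≤ -|a| := by simp
                _ ≤ a := neg_abs_le a
                _ ≤ X ω := h1
            · exact h2.trans ((le_abs_self b).trans (le_max_right _ _))
    have hint : ∫ ω, Real.exp (l * X ω) ∂ν ≤
        (b * Real.exp (l * a) - a * Real.exp (l * b)) / (b - a) := by
      have hRHSint : Integrable (fun ω =>
          (b * Real.exp (l * a) - a * Real.exp (l * b)) / (b - a)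
          + X ω * ((Real.exp (l * b) - Real.exp (l * a)) / (b - a))) ν :=
        (integrable_const _).add (hXint.mul_const _)
      calc ∫ ω, Real.exp (l * X ω) ∂ν ≤ ∫ ω,
            ((b * Real.exp (l * a) - a * Real.exp (l * b)) / (b - a)
            + X ω * ((Real.exp (l * b) - Real.exp (l * a)) / (b - a))) ∂ν :=
          integral_mono hexpint hRHSint hpt
        _ = (b * Real.exp (l * a) - a * Real.exp (l * b)) / (b - a) := by
          rw [integral_add (integrable_const _) (hXint.mul_const _), integral_const,
            integral_mul_const, hmean]
          simp
    -- rewrite in terms of q and h and apply the scalar lemma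
    set q : ℝ := -a / (b - a) with hq_def
    have hq0 : 0 ≤ q := div_nonneg (by linarith) hba.le
    have hq1 : q ≤ 1 := by
      rw [hq_def, div_le_one hba]
      linarith
    have key := hoeff_scalar hq0 hq1 (l * (b - a))
    have e1 : -q * (l * (b - a)) = l * a := by
      rw [hq_def]; field_simp
    have e2 : (1 - q) * (l * (b - a)) = l * b := by
      rw [hq_def]; field_simp; ring
    have e3 : 1 - q = b / (b - a) := by
      rw [hq_def]; field_simp; ring
    have e4 : (l * (b - a)) ^ 2 / 8 = l ^ 2 * (b - a) ^ 2 / 8 := by ring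
    rw [e1, e2, e3, e4] at key
    calc ∫ ω, Real.exp (l * X ω) ∂ν
        ≤ (b * Real.exp (l * a) - a * Real.exp (l * b)) / (b - a) := hint
      _ = b / (b - a) * Real.exp (l * a) + q * Real.exp (l * b) := by
          rw [hq_def]; field_simp; ring
      _ ≤ Real.exp (l ^ 2 * (b - a) ^ 2 / 8) := key
lemma integral_pi_pow {α : Type*} [MeasurableSpace α] (ν : Measure α) [SigmaFinite ν]
    (m : ℕ) (f : α → ℝ) :
    (∫ y : Fin m → α, ∏ j, f (y j) ∂(Measure.pi fun _ : Fin m => ν))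
      = (∫ x, f x ∂ν) ^ m := by
  letI : MeasureSpace α := ⟨ν⟩
  have hvol : (Measure.pi fun _ : Fin m => ν) = (volume : Measure (Fin m → α)) := rfl
  rw [hvol]
  exact (MeasureTheory.integral_fintype_prod_eq_pow (ι := Fin m) f (μ := ν)).trans (by simp)

open ProbabilityTheory in
/-- One-sided Hoeffding inequality for the empirical sum over `m` i.i.d. samples. -/
lemma hoeffding_sum_le {α : Type*} [MeasurableSpace α] (ν : Measure α) [IsProbabilityMeasure ν]
    (m : ℕ) (hm : 0 < m) (φ : α → ℝ) (hφ : Measurable φ) (r : ℝ) (hr : 0 < r)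
    (hb : ∀ ω, φ ω ∈ Set.Icc (0:ℝ) r) (t : ℝ) (ht : 0 ≤ t) :
    (Measure.pi fun _ : Fin m => ν)
        {y | (m : ℝ) * t ≤ ∑ j, (φ (y j) - ∫ x, φ x ∂ν)}
      ≤ ENNReal.ofReal (Real.exp (-(2 * m * t ^ 2 / r ^ 2))) := by
  set μ' : ℝ := ∫ x, φ x ∂ν with hμ'
  set l : ℝ := 4 * t / r ^ 2 with hl
  have hl0 : 0 ≤ l := by positivity
  set Pm : Measure (Fin m → α) := Measure.pi fun _ : Fin m => ν with hPm
  set X : (Fin m → α) → ℝ := fun y => ∑ j, (φ (y j) - μ') with hX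
  have hXmeas : Measurable X := by
    apply Finset.measurable_sum
    intro j _
    exact (hφ.comp (measurable_pi_apply j)).sub measurable_const
  -- integrability of φ and its mean bounds
  have hφint : Integrable φ ν := by
    apply Integrable.mono' (integrable_const r) hφ.aestronglyMeasurable
    filter_upwards with ω
    rw [Real.norm_eq_abs, abs_of_nonneg (hb ω).1]
    exact (hb ω).2
  have hμ'mem : μ' ∈ Set.Icc (0:ℝ) r := by
    constructor
    · exact integral_nonneg fun ω => (hb ω).1
    · calc μ' ≤ ∫ _x, r ∂ν := integral_mono hφint (integrable_const r) fun ω => (hb ω).2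
        _ = r := by simp
  -- Hoeffding's lemma for one sample
  have hsingle : ∫ x, Real.exp (l * (φ x - μ')) ∂ν ≤ Real.exp (l ^ 2 * r ^ 2 / 8) := by
    have := hoeffding_mgf ν (fun x => φ x - μ') (hφ.sub measurable_const) (-μ') (r - μ')
      (by linarith [hμ'mem.1, hμ'mem.2]) (fun ω => by
        constructor <;> [linarith [(hb ω).1]; linarith [(hb ω).2]])
      (by rw [integral_sub hφint (integrable_const μ'), integral_const]; simp [hμ']) l
    simpa using this
  -- bound the mgf of the sum
  have hexp_bdd : ∀ y : Fin m → α, Real.exp (l * X y) ≤ Real.exp (l * (m * r)) := by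
    intro y
    rw [Real.exp_le_exp]
    apply mul_le_mul_of_nonneg_left _ hl0
    calc X y ≤ ∑ _j : Fin m, r := by
          apply Finset.sum_le_sum
          intro j _
          have := (hb (y j)).2
          have := hμ'mem.1
          linarith
      _ = m * r := by simp [mul_comm]
  have hXexpint : Integrable (fun y => Real.exp (l * X y)) Pm := by
    apply Integrable.mono' (integrable_const (Real.exp (l * (m * r))))
      (hXmeas.const_mul l).exp.aestronglyMeasurable
    filter_upwards with y
    rw [Real.norm_eq_abs, Real.abs_exp]
    exact hexp_bdd y
  have hmgf : mgf X Pm l ≤ Real.exp (m * (l ^ 2 * r ^ 2 / 8)) := by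
    have hfac : ∀ y : Fin m → α, Real.exp (l * X y)
        = ∏ j, Real.exp (l * (φ (y j) - μ')) := by
      intro y
      rw [← Real.exp_sum]
      congr 1
      rw [hX, Finset.mul_sum]
    have heq : mgf X Pm l = (∫ x, Real.exp (l * (φ x - μ')) ∂ν) ^ m := by
      rw [mgf]
      simp_rw [hfac]
      rw [hPm]
      exact integral_pi_pow ν m (fun x => Real.exp (l * (φ x - μ')))
    rw [heq]
    calc (∫ x, Real.exp (l * (φ x - μ')) ∂ν) ^ m
        ≤ (Real.exp (l ^ 2 * r ^ 2 / 8)) ^ m :=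
          pow_le_pow_left₀ (integral_nonneg fun x => (Real.exp_pos _).le) hsingle m
      _ = Real.exp (m * (l ^ 2 * r ^ 2 / 8)) := by
          rw [← Real.exp_nat_mul]
  -- Chernoff
  have hcher := measure_ge_le_exp_mul_mgf (X := X) (μ := Pm) ((m : ℝ) * t) hl0 hXexpint
  have hfin : Pm {y | (m : ℝ) * t ≤ X y} ≠ ⊤ := measure_ne_top _ _
  have hbound : Real.exp (-l * ((m : ℝ) * t)) * mgf X Pm l
      ≤ Real.exp (-(2 * m * t ^ 2 / r ^ 2)) := by
    calc Real.exp (-l * ((m : ℝ) * t)) * mgf X Pm l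
        ≤ Real.exp (-l * ((m : ℝ) * t)) * Real.exp (m * (l ^ 2 * r ^ 2 / 8)) := by
          apply mul_le_mul_of_nonneg_left hmgf (Real.exp_pos _).le
      _ = Real.exp (-l * ((m : ℝ) * t) + m * (l ^ 2 * r ^ 2 / 8)) := by
          rw [← Real.exp_add]
      _ = Real.exp (-(2 * m * t ^ 2 / r ^ 2)) := by
          congr 1
          rw [hl]
          field_simp
          ring
  rw [ENNReal.le_ofReal_iff_toReal_le hfin (Real.exp_pos _).le]
  exact hcher.trans hbound

/-- Two-sided Hoeffding inequality for the empirical mean. -/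
lemma hoeffding_two_sided {α : Type*} [MeasurableSpace α] (ν : Measure α)
    [IsProbabilityMeasure ν]
    (m : ℕ) (hm : 0 < m) (φ : α → ℝ) (hφ : Measurable φ) (r : ℝ) (hr : 0 < r)
    (hb : ∀ ω, φ ω ∈ Set.Icc (0:ℝ) r) (t : ℝ) (ht : 0 ≤ t) :
    (Measure.pi fun _ : Fin m => ν)
        {y | t < |(∫ x, φ x ∂ν) - (1 / (m : ℝ)) * ∑ j, φ (y j)|}
      ≤ ENNReal.ofReal (2 * Real.exp (-(2 * m * t ^ 2 / r ^ 2))) := by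
  set μ' : ℝ := ∫ x, φ x ∂ν with hμ'
  have hm' : (0:ℝ) < m := Nat.cast_pos.2 hm
  set A : Set (Fin m → α) := {y | (m : ℝ) * t ≤ ∑ j, (φ (y j) - μ')} with hA
  set B : Set (Fin m → α) := {y | (m : ℝ) * t ≤ ∑ j, ((r - φ (y j)) - ∫ x, (r - φ x) ∂ν)} with hB
  have hφint : Integrable φ ν := by
    apply Integrable.mono' (integrable_const r) hφ.aestronglyMeasurable
    filter_upwards with ω
    rw [Real.norm_eq_abs, abs_of_nonneg (hb ω).1]
    exact (hb ω).2
  have hsub : {y : Fin m → α | t < |μ' - (1 / (m : ℝ)) * ∑ j, φ (y j)|} ⊆ A ∪ B := by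
    intro y hy
    simp only [Set.mem_setOf_eq] at hy
    have hsum : ∑ j, (φ (y j) - μ') = (∑ j, φ (y j)) - m * μ' := by
      rw [Finset.sum_sub_distrib]
      simp [mul_comm]
    rcases le_or_gt (μ' - (1 / (m : ℝ)) * ∑ j, φ (y j)) 0 with hc | hc
    · -- empirical mean is above μ' : event A
      left
      rw [hA, Set.mem_setOf_eq, hsum]
      have : t < (1 / (m : ℝ)) * ∑ j, φ (y j) - μ' := by
        rw [abs_of_nonpos hc] at hy
        linarith
      have := (mul_lt_mul_iff_right₀ hm').2 this
      calc (m:ℝ) * t ≤ (m:ℝ) * ((1 / (m : ℝ)) * ∑ j, φ (y j) - μ') := this.le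
        _ = (∑ j, φ (y j)) - m * μ' := by field_simp
    · right
      rw [hB, Set.mem_setOf_eq]
      have hrint : ∫ x, (r - φ x) ∂ν = r - μ' := by
        rw [integral_sub (integrable_const r) hφint, integral_const]
        simp [hμ']
      have hsum2 : ∑ j, ((r - φ (y j)) - ∫ x, (r - φ x) ∂ν)
          = (m:ℝ) * μ' - ∑ j, φ (y j) := by
        rw [hrint]
        rw [Finset.sum_sub_distrib]
        simp [Finset.sum_sub_distrib, mul_comm]
      rw [hsum2]
      rw [abs_of_pos hc] at hy
      have : t < μ' - (1 / (m : ℝ)) * ∑ j, φ (y j) := hy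
      have := (mul_lt_mul_iff_right₀ hm').2 this
      calc (m:ℝ) * t ≤ (m:ℝ) * (μ' - (1 / (m : ℝ)) * ∑ j, φ (y j)) := this.le
        _ = (m:ℝ) * μ' - ∑ j, φ (y j) := by field_simp
  calc (Measure.pi fun _ : Fin m => ν) {y | t < |μ' - (1 / (m : ℝ)) * ∑ j, φ (y j)|}
      ≤ (Measure.pi fun _ : Fin m => ν) (A ∪ B) := measure_mono hsub
    _ ≤ (Measure.pi fun _ : Fin m => ν) A + (Measure.pi fun _ : Fin m => ν) B :=
        measure_union_le A B
    _ ≤ ENNReal.ofReal (Real.exp (-(2 * m * t ^ 2 / r ^ 2)))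
        + ENNReal.ofReal (Real.exp (-(2 * m * t ^ 2 / r ^ 2))) := by
        apply add_le_add
        · exact hoeffding_sum_le ν m hm φ hφ r hr hb t ht
        · exact hoeffding_sum_le ν m hm (fun x => r - φ x) (measurable_const.sub hφ) r hr
            (fun ω => by
              constructor <;> [linarith [(hb ω).2]; linarith [(hb ω).1]]) t ht
    _ = ENNReal.ofReal (2 * Real.exp (-(2 * m * t ^ 2 / r ^ 2))) := by
        rw [← ENNReal.ofReal_add (Real.exp_pos _).le (Real.exp_pos _).le]
        ring_nf

lemma pmean_lip (g : ℕ) (p : ℝ) (hp : 1 ≤ p) (w : Fin g → ℝ) (hw : ∀ i, 0 ≤ w i)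
    (hw1 : ∑ i, w i = 1) (S T : Fin g → ℝ) (hS : ∀ i, 0 ≤ S i) (hT : ∀ i, 0 ≤ T i)
    (t : ℝ) (ht : 0 ≤ t) (hd : ∀ i, |S i - T i| ≤ t) :
    |pmean g p w S - pmean g p w T| ≤ t := by
  have hp0 : (0:ℝ) < p := lt_of_lt_of_le one_pos hp
  have hpne : p ≠ 0 := hp0.ne'
  set a : Fin g → ℝ := fun i => (w i) ^ (1/p) * S i with ha
  set b : Fin g → ℝ := fun i => (w i) ^ (1/p) * T i with hb
  have hwpow : ∀ i, ((w i) ^ (1/p)) ^ p = w i := by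
    intro i
    rw [← Real.rpow_mul (hw i), one_div, inv_mul_cancel₀ hpne, Real.rpow_one]
  have habs : ∀ (v : Fin g → ℝ), (∀ i, 0 ≤ v i) → ∀ i,
      |(w i) ^ (1/p) * v i| ^ p = w i * v i ^ p := by
    intro v hv i
    rw [abs_of_nonneg (mul_nonneg (Real.rpow_nonneg (hw i) _) (hv i)),
      Real.mul_rpow (Real.rpow_nonneg (hw i) _) (hv i), hwpow i]
  have hpmS : pmean g p w S = (∑ i, |a i| ^ p) ^ (1/p) := by
    rw [pmean, if_neg hpne]
    congr 1
    exact Finset.sum_congr rfl fun i _ => (habs S hS i).symm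
  have hpmT : pmean g p w T = (∑ i, |b i| ^ p) ^ (1/p) := by
    rw [pmean, if_neg hpne]
    congr 1
    exact Finset.sum_congr rfl fun i _ => (habs T hT i).symm
  -- the Lp "norm" of the difference is at most t
  have hdiff : (∑ i, |a i - b i| ^ p) ^ (1/p) ≤ t := by
    have hsum : ∑ i, |a i - b i| ^ p ≤ t ^ p := by
      calc ∑ i, |a i - b i| ^ p ≤ ∑ i, w i * t ^ p := by
            apply Finset.sum_le_sum
            intro i _
            have : a i - b i = (w i) ^ (1/p) * (S i - T i) := by
              simp only [ha, hb]; ring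
            rw [this, abs_mul, abs_of_nonneg (Real.rpow_nonneg (hw i) _),
              Real.mul_rpow (Real.rpow_nonneg (hw i) _) (abs_nonneg _), hwpow i]
            exact mul_le_mul_of_nonneg_left
              (Real.rpow_le_rpow (abs_nonneg _) (hd i) hp0.le) (hw i)
        _ = t ^ p := by rw [← Finset.sum_mul, hw1, one_mul]
    calc (∑ i, |a i - b i| ^ p) ^ (1/p) ≤ (t ^ p) ^ (1/p) :=
          Real.rpow_le_rpow (Finset.sum_nonneg fun i _ =>
            Real.rpow_nonneg (abs_nonneg _) _) hsum (by positivity)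
      _ = t := by
          rw [← Real.rpow_mul ht, mul_one_div_cancel hpne, Real.rpow_one]
  -- triangle inequalities
  have tri1 : (∑ i, |a i| ^ p) ^ (1/p)
      ≤ (∑ i, |a i - b i| ^ p) ^ (1/p) + (∑ i, |b i| ^ p) ^ (1/p) := by
    have := Real.Lp_add_le Finset.univ (fun i => a i - b i) b hp
    simpa using this
  have tri2 : (∑ i, |b i| ^ p) ^ (1/p)
      ≤ (∑ i, |a i - b i| ^ p) ^ (1/p) + (∑ i, |a i| ^ p) ^ (1/p) := by
    have := Real.Lp_add_le Finset.univ (fun i => b i - a i) a hp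
    have habssym : ∀ i, |b i - a i| = |a i - b i| := fun i => abs_sub_comm _ _
    simp only [habssym, sub_add_cancel] at this
    simpa using this
  rw [hpmS, hpmT, abs_le]
  constructor <;> [linarith; linarith]
lemma pi_eval_preimage {ι : Type*} [Fintype ι] {α : ι → Type*}
    [∀ i, MeasurableSpace (α i)] (μ : ∀ i, Measure (α i)) [∀ i, IsProbabilityMeasure (μ i)]
    (i : ι) (s : Set (α i)) (hs : MeasurableSet s) :
    Measure.pi μ (Function.eval i ⁻¹' s) = μ i s := by
  classical
  rw [Set.eval_preimage]
  rw [Measure.pi_pi]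
  rw [Finset.prod_eq_single i]
  · rw [Function.update_self]
  · intro j _ hj
    rw [Function.update_of_ne hj]
    simp
  · simp

/-- Estimation of the power-mean malfare of per-group expectations with the Hoeffding bound:
with probability at least `1 − δ` over `m` i.i.d. samples from each of the `g` group
distributions, the empirical power mean is within `r √(log(2g/δ)/(2m))` of the true one. -/
theorem pmean_hoeffding_estimation (g m : ℕ) (hg : 0 < g) (hm : 0 < m)
    (r δ : ℝ) (hr : 0 < r) (hδ : δ ∈ Set.Ioo (0:ℝ) 1)
    (p : ℝ) (hp : 1 ≤ p)
    (w : Fin g → ℝ) (hw : ∀ i, 0 ≤ w i) (hw1 : ∑ i, w i = 1)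
    (Ω : Fin g → Type*) [∀ i, MeasurableSpace (Ω i)]
    (μ : ∀ i, Measure (Ω i)) [∀ i, IsProbabilityMeasure (μ i)]
    (f : ∀ i, Ω i → ℝ) (hf : ∀ i, Measurable (f i))
    (hfb : ∀ i ω, f i ω ∈ Set.Icc (0:ℝ) r) :
    ENNReal.ofReal (1 - δ) ≤
      (Measure.pi (fun i : Fin g => Measure.pi (fun _ : Fin m => μ i)))
        {x | |pmean g p w (fun i => ∫ ω, f i ω ∂(μ i)) -
              pmean g p w (fun i => (1 / (m : ℝ)) * ∑ j : Fin m, f i (x i j))| ≤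
              r * Real.sqrt (Real.log (2 * g / δ) / (2 * m))} := by
  classical
  obtain ⟨hδ0, hδ1⟩ := hδ
  have hg' : (0:ℝ) < g := Nat.cast_pos.2 hg
  have hm' : (0:ℝ) < m := Nat.cast_pos.2 hm
  set t : ℝ := r * Real.sqrt (Real.log (2 * g / δ) / (2 * m)) with htdef
  have hlog0 : 0 ≤ Real.log (2 * g / δ) := by
    apply Real.log_nonneg
    rw [le_div_iff₀ hδ0]
    have h1g : (1:ℝ) ≤ g := Nat.one_le_cast.2 hg
    nlinarith
  have ht0 : 0 ≤ t := mul_nonneg hr.le (Real.sqrt_nonneg _)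
  -- computation of the per-group failure probability
  have hval : 2 * Real.exp (-(2 * m * t ^ 2 / r ^ 2)) = δ / g := by
    have hts : t ^ 2 = r ^ 2 * (Real.log (2 * g / δ) / (2 * m)) := by
      rw [htdef, mul_pow, Real.sq_sqrt (div_nonneg hlog0 (by positivity))]
    have harg : 2 * (m:ℝ) * (r ^ 2 * (Real.log (2 * g / δ) / (2 * m))) / r ^ 2
        = Real.log (2 * g / δ) := by
      field_simp
    rw [hts, harg, Real.exp_neg, Real.exp_log (by positivity)]
    field_simp
  set S : Fin g → ℝ := fun i => ∫ ω, f i ω ∂(μ i) with hSdef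
  set Bad : ∀ i : Fin g, Set (Fin m → Ω i) :=
    fun i => {y | t < |S i - (1 / (m : ℝ)) * ∑ j, f i (y j)|} with hBaddef
  have hBadmeas : ∀ i, MeasurableSet (Bad i) := by
    intro i
    have hmeas : Measurable fun y : Fin m → Ω i =>
        |S i - (1 / (m : ℝ)) * ∑ j, f i (y j)| := by
      apply Measurable.abs
      apply Measurable.sub measurable_const
      apply Measurable.const_mul
      exact Finset.measurable_sum _ fun j _ => (hf i).comp (measurable_pi_apply j)
    exact measurableSet_lt measurable_const hmeas
  have hBadbound : ∀ i, (Measure.pi fun _ : Fin m => μ i) (Bad i)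
      ≤ ENNReal.ofReal (δ / g) := by
    intro i
    have := hoeffding_two_sided (μ i) m hm (f i) (hf i) r hr (hfb i) t ht0
    rw [hval] at this
    exact this
  set P := Measure.pi fun i : Fin g => Measure.pi fun _ : Fin m => μ i with hPdef
  set U : Set (∀ i : Fin g, Fin m → Ω i) := ⋃ i, Function.eval i ⁻¹' Bad i with hUdef
  have hUmeas : MeasurableSet U :=
    MeasurableSet.iUnion fun i => (hBadmeas i).preimage (measurable_pi_apply i)
  have hPU : P U ≤ ENNReal.ofReal δ := by
    calc P U ≤ ∑' i : Fin g, P (Function.eval i ⁻¹' Bad i) := measure_iUnion_le _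
      _ = ∑ i : Fin g, P (Function.eval i ⁻¹' Bad i) := tsum_fintype _
      _ ≤ ∑ i : Fin g, ENNReal.ofReal (δ / g) := by
          apply Finset.sum_le_sum
          intro i _
          rw [hPdef]
          exact le_of_le_of_eq (le_of_eq (pi_eval_preimage
            (fun i : Fin g => Measure.pi fun _ : Fin m => μ i) i (Bad i) (hBadmeas i))) rfl
            |>.trans (hBadbound i)
      _ = ENNReal.ofReal δ := by
          rw [Finset.sum_const, Finset.card_univ, Fintype.card_fin, nsmul_eq_mul,
            ← ENNReal.ofReal_natCast g, ← ENNReal.ofReal_mul (by positivity)]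
          congr 1
          field_simp
  have hsub : Uᶜ ⊆ {x : ∀ i : Fin g, Fin m → Ω i |
      |pmean g p w S - pmean g p w (fun i => (1 / (m : ℝ)) * ∑ j, f i (x i j))| ≤ t} := by
    intro x hx
    simp only [hUdef, Set.mem_compl_iff, Set.mem_iUnion, not_exists] at hx
    have hd : ∀ i, |S i - (1 / (m : ℝ)) * ∑ j, f i (x i j)| ≤ t := by
      intro i
      have := hx i
      simp only [hBaddef, Set.mem_preimage, Set.mem_setOf_eq, Function.eval] at this
      exact not_lt.1 this
    exact pmean_lip g p hp w hw hw1 S _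
      (fun i => integral_nonneg fun ω => (hfb i ω).1)
      (fun i => mul_nonneg (by positivity)
        (Finset.sum_nonneg fun j _ => (hfb i (x i j)).1)) t ht0 hd
  have hofReal : ENNReal.ofReal (1 - δ) = 1 - ENNReal.ofReal δ := by
    apply ENNReal.eq_sub_of_add_eq ENNReal.ofReal_ne_top
    rw [← ENNReal.ofReal_add (by linarith) hδ0.le]
    norm_num
  calc ENNReal.ofReal (1 - δ) = 1 - ENNReal.ofReal δ := hofReal
    _ ≤ 1 - P U := tsub_le_tsub_left hPU 1
    _ = P Uᶜ := (prob_compl_eq_one_sub hUmeas).symm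
    _ ≤ P {x : ∀ i : Fin g, Fin m → Ω i |
          |pmean g p w S - pmean g p w (fun i => (1 / (m : ℝ)) * ∑ j, f i (x i j))| ≤ t} :=
        measure_mono hsub
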